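/- For all natural numbers m, n, k, the balanced quantum binomials satisfy the q-Vandermonde identity [m+n choose k] = Σ_{j=0}^{k} q^{m(k-j) - nj}·[m choose j]·[n choose k-j] in ℚ(q), where terms with j > m or k-j > n are interpreted as 0. -/

import Mathlib

open scoped BigOperators

noncomputable def q : RatFunc ℚ := RatFunc.X

noncomputable def qInt (k : ℕ) : RatFunc ℚ := (q ^ k - q⁻¹ ^ k) / (q - q⁻¹)

noncomputable def qFact (n : ℕ) : RatFunc ℚ := ∏ i ∈ Finset.range n, qInt (i + 1)

noncomputable def qBinom (n k : ℕ) : RatFunc ℚ :=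
  if k ≤ n then qFact n / (qFact (n - k) * qFact k) else 0

lemma hq : q ≠ 0 := RatFunc.X_ne_zero
lemma q_pow_ne_one (d : ℕ) (hd : d ≠ 0) : q ^ d ≠ 1 := by
  intro h
  have h1 : (algebraMap (Polynomial ℚ) (RatFunc ℚ)) (Polynomial.X ^ d) =
      (algebraMap (Polynomial ℚ) (RatFunc ℚ)) 1 := by
    simpa [map_pow, RatFunc.algebraMap_X, q] using h
  have := RatFunc.algebraMap_injective ℚ h1
  have hdeg := congrArg Polynomial.natDegree this
  simp [Polynomial.natDegree_X_pow] at hdeg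
  exact hd hdeg

lemma num_ne_zero (k : ℕ) (hk : k ≠ 0) : q ^ k - q⁻¹ ^ k ≠ 0 := by
  intro h
  have h2 : q ^ k = q⁻¹ ^ k := sub_eq_zero.mp h
  have : q ^ (2 * k) = 1 := by
    have h3 : q ^ k * q⁻¹ ^ k = 1 := by
      rw [← mul_pow, mul_inv_cancel₀ hq, one_pow]
    rw [two_mul, pow_add]
    nth_rewrite 2 [h2]
    exact h3
  exact q_pow_ne_one (2 * k) (by omega) this

lemma hden : q - q⁻¹ ≠ 0 := by
  have := num_ne_zero 1 one_ne_zero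
  simpa using this

lemma qInt_ne_zero (k : ℕ) (hk : k ≠ 0) : qInt k ≠ 0 :=
  div_ne_zero (num_ne_zero k hk) hden

lemma qFact_ne_zero (n : ℕ) : qFact n ≠ 0 := by
  apply Finset.prod_ne_zero_iff.mpr
  intro i _
  exact qInt_ne_zero (i + 1) (by omega)

lemma qFact_succ (n : ℕ) : qFact (n + 1) = qFact n * qInt (n + 1) :=
  Finset.prod_range_succ _ n

lemma qFact_zero : qFact 0 = 1 := rfl

lemma qInt_add (x y : ℕ) : qInt (x + y) = q ^ y * qInt x + q⁻¹ ^ x * qInt y := by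
  unfold qInt
  rw [← mul_div_assoc, ← mul_div_assoc, ← add_div]
  congr 1
  rw [pow_add, pow_add]
  ring

lemma qBinom_zero_right (n : ℕ) : qBinom n 0 = 1 := by
  simp only [qBinom, Nat.zero_le, if_true, Nat.sub_zero, qFact_zero, mul_one]
  exact div_self (qFact_ne_zero n)

lemma qBinom_self (n : ℕ) : qBinom n n = 1 := by
  simp only [qBinom, le_refl, if_true, Nat.sub_self, qFact_zero, one_mul]
  exact div_self (qFact_ne_zero n)

lemma qBinom_of_gt {n k : ℕ} (h : n < k) : qBinom n k = 0 := by
  simp [qBinom, Nat.not_le.mpr h]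

lemma aux_field {K : Type*} [Field K] (F u v A B C D : K) (hA : A ≠ 0) (hB : B ≠ 0)
    (hC : C ≠ 0) (hD : D ≠ 0) :
    F * (u * A + v * B) / (C * A * (D * B)) = u * (F / (C * (D * B))) + v * (F / (C * A * D)) := by
  field_simp

lemma pascal (m j : ℕ) (hj : 1 ≤ j) :
    qBinom (m + 1) j =
      q ^ (j : ℤ) * qBinom m j + q ^ ((j : ℤ) - (m : ℤ) - 1) * qBinom m (j - 1) := by
  by_cases h1 : j ≤ m
  · have hsum : (m + 1 - j) + j = m + 1 := by omega
    have hA : m + 1 - j = (m - j) + 1 := by omega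
    have hB : j = (j - 1) + 1 := by omega
    have hC : m - (j - 1) = m + 1 - j := by omega
    have e1 : q ^ ((j:ℤ) - (m:ℤ) - 1) = q⁻¹ ^ (m + 1 - j) := by
      rw [inv_pow, ← zpow_natCast q (m + 1 - j), ← zpow_neg]
      congr 1
      omega
    have e2 : q ^ (j : ℤ) = q ^ j := zpow_natCast q j
    have hqint : qInt (m + 1) = q ^ j * qInt (m + 1 - j) + q⁻¹ ^ (m + 1 - j) * qInt j := by
      have h := qInt_add (m + 1 - j) j
      rw [hsum] at h
      exact h
    have hFj : qFact j = qFact (j - 1) * qInt j := by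
      have h := qFact_succ (j - 1)
      rw [← hB] at h
      exact h
    have hFmj : qFact (m + 1 - j) = qFact (m - j) * qInt (m + 1 - j) := by
      have h := qFact_succ (m - j)
      rw [← hA] at h
      exact h
    have n1 : qInt j ≠ 0 := qInt_ne_zero j (by omega)
    have n2 : qInt (m + 1 - j) ≠ 0 := qInt_ne_zero _ (by omega)
    have n3 : qFact (m - j) ≠ 0 := qFact_ne_zero _
    have n4 : qFact (j - 1) ≠ 0 := qFact_ne_zero _
    have hD : m + 1 - j = (m - j) + 1 := hA
    rw [qBinom, qBinom, qBinom, if_pos (by omega : j ≤ m + 1), if_pos h1,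
      if_pos (by omega : j - 1 ≤ m), e1, e2, hC, qFact_succ m, hqint, hFj, hFmj]
    exact aux_field (qFact m) (q ^ j) (q⁻¹ ^ (m + 1 - j)) _ _ _ _ n2 n1 n3 n4
  · by_cases h2 : j = m + 1
    · subst h2
      have e0 : ((m + 1 : ℕ) : ℤ) - (m : ℤ) - 1 = 0 := by push_cast; ring
      rw [qBinom_self, qBinom_of_gt (by omega), e0, zpow_zero]
      simp [qBinom_self]
    · rw [qBinom_of_gt (by omega), qBinom_of_gt (by omega), qBinom_of_gt (by omega : m < j - 1)]
      simp

lemma step_term (m n k' i : ℕ) :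
    q ^ ((((k' + 1 : ℕ)) : ℤ)) *
        (q ^ ((m : ℤ) * (((k' + 1 : ℕ) : ℤ) - ((i + 1 : ℕ) : ℤ)) - (n : ℤ) * ((i + 1 : ℕ) : ℤ)) *
          qBinom m (i + 1) * qBinom n (k' + 1 - (i + 1))) +
      q ^ ((((k' + 1 : ℕ)) : ℤ) - ((m + n : ℕ) : ℤ) - 1) *
        (q ^ ((m : ℤ) * ((k' : ℤ) - (i : ℤ)) - (n : ℤ) * (i : ℤ)) * qBinom m i * qBinom n (k' - i)) =
    q ^ (((m + 1 : ℕ) : ℤ) * (((k' + 1 : ℕ) : ℤ) - ((i + 1 : ℕ) : ℤ)) - (n : ℤ) * ((i + 1 : ℕ) : ℤ)) *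
      qBinom (m + 1) (i + 1) * qBinom n (k' + 1 - (i + 1)) := by
  have hk : k' + 1 - (i + 1) = k' - i := by omega
  rw [hk, pascal m (i + 1) (by omega), Nat.add_sub_cancel]
  have e1 : (((k' + 1 : ℕ)) : ℤ) + ((m : ℤ) * (((k' + 1 : ℕ) : ℤ) - ((i + 1 : ℕ) : ℤ)) - (n : ℤ) * ((i + 1 : ℕ) : ℤ)) =
      (((m + 1 : ℕ) : ℤ) * (((k' + 1 : ℕ) : ℤ) - ((i + 1 : ℕ) : ℤ)) - (n : ℤ) * ((i + 1 : ℕ) : ℤ)) + ((i + 1 : ℕ) : ℤ) := by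
    push_cast; ring
  have e2 : ((((k' + 1 : ℕ)) : ℤ) - ((m + n : ℕ) : ℤ) - 1) + ((m : ℤ) * ((k' : ℤ) - (i : ℤ)) - (n : ℤ) * (i : ℤ)) =
      (((m + 1 : ℕ) : ℤ) * (((k' + 1 : ℕ) : ℤ) - ((i + 1 : ℕ) : ℤ)) - (n : ℤ) * ((i + 1 : ℕ) : ℤ)) + (((i + 1 : ℕ) : ℤ) - (m : ℤ) - 1) := by
    push_cast; ring
  rw [show ∀ a b : ℤ, ∀ X Z : RatFunc ℚ, q ^ a * (q ^ b * X * Z) = q ^ (a + b) * X * Z from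
    fun a b X Z => by rw [zpow_add₀ hq]; ring,
    show ∀ a b : ℤ, ∀ X Z : RatFunc ℚ, q ^ a * (q ^ b * X * Z) = q ^ (a + b) * X * Z from
    fun a b X Z => by rw [zpow_add₀ hq]; ring,
    e1, e2, zpow_add₀ hq, zpow_add₀ hq]
  ring

theorem qBinom_vandermonde (m n k : ℕ) :
    qBinom (m + n) k =
      ∑ j ∈ Finset.range (k + 1),
        q ^ ((m : ℤ) * ((k : ℤ) - (j : ℤ)) - (n : ℤ) * (j : ℤ)) *
          qBinom m j * qBinom n (k - j) := by
  induction m generalizing k with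
  | zero =>
    rw [Finset.sum_eq_single 0]
    · simp [qBinom_zero_right]
    · intro j hj hjne
      rw [qBinom_of_gt (Nat.pos_of_ne_zero hjne)]
      ring
    · intro h
      exact absurd (Finset.mem_range.mpr (by omega)) h
  | succ m ih =>
    cases k with
    | zero => simp [qBinom_zero_right]
    | succ k' =>
      have hL : m + 1 + n = (m + n) + 1 := by omega
      rw [hL, pascal (m + n) (k' + 1) (by omega), Nat.add_sub_cancel, ih (k' + 1), ih k',
        Finset.mul_sum, Finset.mul_sum]
      conv_rhs => rw [Finset.sum_range_succ' _ (k' + 1)]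
      rw [Finset.sum_range_succ' _ (k' + 1)]
      rw [add_right_comm, ← Finset.sum_add_distrib]
      congr 1
      · refine Finset.sum_congr rfl fun i _ => ?_
        exact step_term m n k' i
      · simp only [Nat.cast_zero, mul_zero, sub_zero, Nat.sub_zero, qBinom_zero_right, mul_one]
        rw [← mul_assoc, ← zpow_add₀ hq]
        congr 1
        push_cast
        ring
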